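/- Let Pr be a finitely additive probability on an algebra of events. If there exists a probability Pr* and a partition {E_i : i ∈ I} of the event space such that Pr(E_i) < Pr*(E_i) for all i ∈ I, then Pr is not countably additive; moreover the index set I must be countably infinite. -/

import Mathlib

section Aux

variable {Ω : Type*} {I : Type*} (Pr : Set Ω → ℝ)

lemma myPr_empty
    (hadd : ∀ s t : Set Ω, Disjoint s t → Pr (s ∪ t) = Pr s + Pr t) :
    Pr ∅ = 0 := by
  have := hadd ∅ ∅ disjoint_bot_left
  simp at this
  linarith

lemma myPr_mono (hnn : ∀ s, 0 ≤ Pr s)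
    (hadd : ∀ s t : Set Ω, Disjoint s t → Pr (s ∪ t) = Pr s + Pr t)
    {s t : Set Ω} (h : s ⊆ t) : Pr s ≤ Pr t := by
  have h2 := hadd s (t \ s) Set.disjoint_sdiff_right
  rw [Set.union_diff_cancel h] at h2
  have := hnn (t \ s)
  linarith

lemma myPr_sum
    (hadd : ∀ s t : Set Ω, Disjoint s t → Pr (s ∪ t) = Pr s + Pr t)
    (E : I → Set Ω) (hdisj : Pairwise (Function.onFun Disjoint E)) (s : Finset I) :
    Pr (⋃ i ∈ s, E i) = ∑ i ∈ s, Pr (E i) := by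
  classical
  induction s using Finset.induction_on with
  | empty => simpa using myPr_empty Pr hadd
  | @insert a s ha ih =>
      rw [Finset.sum_insert ha, ← ih, Finset.set_biUnion_insert]
      refine hadd _ _ ?_
      refine Set.disjoint_iUnion_right.2 fun i => Set.disjoint_iUnion_right.2 fun hi => ?_
      exact hdisj (fun h => ha (h ▸ hi))

lemma myPr_sum_le_one (hnn : ∀ s, 0 ≤ Pr s) (huniv : Pr Set.univ = 1)
    (hadd : ∀ s t : Set Ω, Disjoint s t → Pr (s ∪ t) = Pr s + Pr t)
    (E : I → Set Ω) (hdisj : Pairwise (Function.onFun Disjoint E)) (s : Finset I) :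
    ∑ i ∈ s, Pr (E i) ≤ 1 := by
  rw [← myPr_sum Pr hadd E hdisj s, ← huniv]
  exact myPr_mono Pr hnn hadd (Set.subset_univ _)

end Aux

/-- If `Pr` and `Pr*` are finitely additive probabilities on `𝒫(Ω)` and there is
a partition `{E i : i ∈ I}` of `Ω` into nonempty sets with `Pr (E i) < Pr* (E i)`
for all `i`, then `Pr` is not countably additive, and moreover `I` is countably
infinite. -/
theorem not_countably_additive_of_pointwise_dominated (Ω : Type*) (I : Type*)
    (Pr PrStar : Set Ω → ℝ)
    (hPrnn : ∀ s, 0 ≤ Pr s) (hPruniv : Pr Set.univ = 1)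
    (hPradd : ∀ s t : Set Ω, Disjoint s t → Pr (s ∪ t) = Pr s + Pr t)
    (hStarnn : ∀ s, 0 ≤ PrStar s) (hStaruniv : PrStar Set.univ = 1)
    (hStaradd : ∀ s t : Set Ω, Disjoint s t → PrStar (s ∪ t) = PrStar s + PrStar t)
    (E : I → Set Ω) (hne : ∀ i, (E i).Nonempty)
    (hdisj : Pairwise (Function.onFun Disjoint E)) (hcover : (⋃ i, E i) = Set.univ)
    (hlt : ∀ i, Pr (E i) < PrStar (E i)) :
    (¬ ∀ F : ℕ → Set Ω, Pairwise (Function.onFun Disjoint F) →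
        HasSum (fun n => Pr (F n)) (Pr (⋃ n, F n))) ∧
    Countable I ∧ Infinite I := by
  classical
  -- positivity of PrStar on pieces
  have hpos : ∀ i, 0 < PrStar (E i) := fun i => lt_of_le_of_lt (hPrnn _) (hlt i)
  -- I is nonempty
  have hΩ : Nonempty Ω := by
    by_contra h
    have : (Set.univ : Set Ω) = ∅ := by
      ext x; exact absurd ⟨x⟩ h
    rw [this, myPr_empty Pr hPradd] at hPruniv
    norm_num at hPruniv
  have hI : Nonempty I := by
    obtain ⟨ω⟩ := hΩ
    have : ω ∈ ⋃ i, E i := hcover ▸ Set.mem_univ ω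
    obtain ⟨i, -⟩ := Set.mem_iUnion.1 this
    exact ⟨i⟩
  -- Countable
  have hcnt : Countable I := by
    have hsum : Summable fun i => PrStar (E i) :=
      summable_of_sum_le (fun i => le_of_lt (hpos i))
        (fun u => myPr_sum_le_one PrStar hStarnn hStaruniv hStaradd E hdisj u)
    have hsupp := hsum.countable_support
    have : Function.support (fun i => PrStar (E i)) = Set.univ := by
      ext i; simp [Function.mem_support, (hpos i).ne']
    rw [this] at hsupp
    exact Set.countable_univ_iff.1 hsupp
  -- Infinite
  have hinf : Infinite I := by
    by_contra h
    have : Finite I := not_infinite_iff_finite.1 h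
    have : Fintype I := Fintype.ofFinite I
    have hcov : (⋃ i ∈ (Finset.univ : Finset I), E i) = Set.univ := by
      rw [← hcover]; simp
    have h1 : (1 : ℝ) = ∑ i ∈ Finset.univ, Pr (E i) := by
      rw [← hPruniv, ← hcov, myPr_sum Pr hPradd E hdisj]
    have h2 : (1 : ℝ) = ∑ i ∈ Finset.univ, PrStar (E i) := by
      rw [← hStaruniv, ← hcov, myPr_sum PrStar hStaradd E hdisj]
    have hlt' : ∑ i ∈ Finset.univ, Pr (E i) < ∑ i ∈ Finset.univ, PrStar (E i) :=
      Finset.sum_lt_sum_of_nonempty Finset.univ_nonempty (fun i _ => hlt i)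
    linarith
  refine ⟨?_, hcnt, hinf⟩
  intro h
  obtain ⟨e⟩ : Nonempty (I ≃ ℕ) := nonempty_equiv_of_countable
  set F : ℕ → Set Ω := fun n => E (e.symm n) with hF
  have hFdisj : Pairwise (Function.onFun Disjoint F) := fun m n hmn =>
    hdisj (e.symm.injective.ne hmn)
  have hFcover : (⋃ n, F n) = Set.univ := by
    rw [hF, e.symm.surjective.iUnion_comp E, hcover]
  have hs := h F hFdisj
  rw [hFcover, hPruniv] at hs
  set δ : ℝ := PrStar (F 0) - Pr (F 0) with hδ
  have hδpos : 0 < δ := sub_pos.2 (hlt _)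
  have hbound : ∀ u : Finset ℕ, ∑ n ∈ u, Pr (F n) ≤ 1 - δ := by
    intro u
    have hsub : ∑ n ∈ u, Pr (F n) ≤ ∑ n ∈ insert 0 u, Pr (F n) :=
      Finset.sum_le_sum_of_subset_of_nonneg (Finset.subset_insert 0 u)
        (fun n _ _ => hPrnn _)
    have hsingle : δ ≤ ∑ n ∈ insert 0 u, (PrStar (F n) - Pr (F n)) :=
      Finset.single_le_sum (f := fun n => PrStar (F n) - Pr (F n))
        (fun n _ => le_of_lt (sub_pos.2 (hlt _))) (Finset.mem_insert_self 0 u)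
    rw [Finset.sum_sub_distrib] at hsingle
    have hle1 : ∑ n ∈ insert 0 u, PrStar (F n) ≤ 1 :=
      myPr_sum_le_one PrStar hStarnn hStaruniv hStaradd F hFdisj _
    linarith
  have := hasSum_le_of_sum_le hs hbound
  linarith
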